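/- Let N be a positive integer and let f be a trigonometric polynomial of degree d. Then |‖f‖_{L^1([0,1])} − (1/N) ∑_{j=1}^N |f(j/N)|| ≤ (4πd/N) · ‖f‖_{L^1([0,1])}. -/

import Mathlib

open MeasureTheory

/-- `e z = e^{2πiz}`. -/
noncomputable def e (x : ℝ) : ℂ := Complex.exp (2 * Real.pi * Complex.I * x)

lemma e_cont : Continuous e := by unfold e; fun_prop
lemma e_add (x y : ℝ) : e (x + y) = e x * e y := by
  unfold e; rw [← Complex.exp_add]; push_cast; ring_nf
lemma e_conj (x : ℝ) : (starRingEnd ℂ) (e x) = e (-x) := by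
  unfold e
  rw [← Complex.exp_conj]
  congr 1
  simp only [map_mul, Complex.conj_I, Complex.conj_ofReal, map_ofNat]
  push_cast; ring

lemma e_norm (x : ℝ) : ‖e x‖ = 1 := by
  unfold e
  rw [Complex.norm_exp]
  norm_num [Complex.mul_re]

lemma mul_conj_norm (z : ℂ) : z * (starRingEnd ℂ) z = ((‖z‖^2 : ℝ) : ℂ) := by
  rw [Complex.mul_conj, Complex.normSq_eq_norm_sq]

lemma e_int (m : ℤ) : e m = 1 := by
  unfold e
  have h : (2 * Real.pi * Complex.I * (m:ℝ)) = m * (2 * Real.pi * Complex.I) := by push_cast; ring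
  rw [h, Complex.exp_int_mul_two_pi_mul_I]

noncomputable def DD (d : ℕ) (u : ℝ) : ℂ := ∑ k ∈ Finset.range d, e ((k:ℝ) * u)

noncomputable def K (d : ℕ) (u : ℝ) : ℂ :=
  2 * Real.pi * Complex.I * (e ((d:ℝ) * u) - e (-(d:ℝ) * u)) * (DD d u * (starRingEnd ℂ) (DD d u))

lemma DD_cont (d : ℕ) : Continuous (DD d) := by
  unfold DD
  exact continuous_finset_sum _ (fun k _ => e_cont.comp (by fun_prop))

lemma K_cont (d : ℕ) : Continuous (K d) := by
  unfold K
  have := DD_cont d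
  have h1 : Continuous (fun u : ℝ => e ((d:ℝ) * u)) := e_cont.comp (by fun_prop)
  have h2 : Continuous (fun u : ℝ => e (-(d:ℝ) * u)) := e_cont.comp (by fun_prop)
  have h3 : Continuous (fun u : ℝ => (starRingEnd ℂ) (DD d u)) := Complex.continuous_conj.comp this
  fun_prop

lemma K_expand (d : ℕ) (n : ℤ) (u : ℝ) :
    e (-(n:ℝ) * u) * K d u
      = 2 * Real.pi * Complex.I * ∑ j ∈ Finset.range d, ∑ k ∈ Finset.range d,
          (e (((((d:ℤ) - n + j - k) : ℤ):ℝ) * u) - e ((((-(d:ℤ) - n + j - k) : ℤ):ℝ) * u)) := by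
  unfold K DD
  rw [map_sum]
  simp only [e_conj, Finset.sum_mul_sum]
  simp only [Finset.mul_sum]
  refine Finset.sum_congr rfl fun j _ => Finset.sum_congr rfl fun k _ => ?_
  simp only [← neg_mul]
  have h1 : e (-(n:ℝ)*u) * e ((d:ℝ)*u) * e ((j:ℝ)*u) * e (-(k:ℝ)*u)
      = e (((((d:ℤ) - n + j - k) : ℤ):ℝ) * u) := by
    rw [← e_add, ← e_add, ← e_add]; congr 1; push_cast; ring
  have h2 : e (-(n:ℝ)*u) * e (-(d:ℝ)*u) * e ((j:ℝ)*u) * e (-(k:ℝ)*u)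
      = e ((((-(d:ℤ) - n + j - k) : ℤ):ℝ) * u) := by
    rw [← e_add, ← e_add, ← e_add]; congr 1; push_cast; ring
  linear_combination (2*(Real.pi:ℂ)*Complex.I)*h1 - (2*(Real.pi:ℂ)*Complex.I)*h2

open intervalIntegral in
lemma e_integral (m : ℤ) : (∫ u in (0:ℝ)..1, e ((m:ℝ) * u)) = if m = 0 then 1 else 0 := by
  by_cases h : m = 0
  · simp [h, e]
  · have hc : (2 * Real.pi * Complex.I * m) ≠ 0 := by
      simp [Real.pi_ne_zero, Complex.I_ne_zero, h]
    have he : ∀ u : ℝ, e ((m:ℝ) * u) = Complex.exp ((2 * Real.pi * Complex.I * m) * u) := by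
      intro u; unfold e; push_cast; ring_nf
    simp only [he]
    rw [integral_exp_mul_complex hc]
    simp only [if_neg h]
    rw [Complex.ofReal_one, mul_one, Complex.ofReal_zero, mul_zero, Complex.exp_zero]
    have h2 : (2 * Real.pi * Complex.I * m) = m * (2 * Real.pi * Complex.I) := by push_cast; ring
    rw [h2, Complex.exp_int_mul_two_pi_mul_I]
    simp

lemma e_intable (m : ℤ) : IntervalIntegrable (fun u : ℝ => e ((m:ℝ) * u)) volume 0 1 :=
  (e_cont.comp (by fun_prop)).intervalIntegrable 0 1

lemma sum_ind (d : ℕ) (c : ℤ) :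
    (∑ k ∈ Finset.range d, if ((k:ℤ) = c) then (1:ℂ) else 0)
      = if (0 ≤ c ∧ c < d) then 1 else 0 := by
  by_cases h0 : 0 ≤ c
  · have : ∀ k : ℕ, ((k:ℤ) = c) ↔ (k = c.toNat) := by intro k; omega
    simp only [this]
    rw [Finset.sum_ite_eq' (Finset.range d) c.toNat (fun _ => (1:ℂ))]
    simp only [Finset.mem_range]
    congr 1
    simp only [eq_iff_iff]
    omega
  · have : ∀ k : ℕ, ¬((k:ℤ) = c) := by intro k; omega
    simp [this, h0]

lemma counting (d : ℕ) (n : ℤ) (h1 : -(d:ℤ) ≤ n) (h2 : n ≤ d) :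
    (∑ j ∈ Finset.range d, ∑ k ∈ Finset.range d,
      ((if ((d:ℤ) - n + j - k = 0) then (1:ℂ) else 0)
        - (if (-(d:ℤ) - n + j - k = 0) then (1:ℂ) else 0))) = (n : ℂ) := by
  have step : ∀ j ∈ Finset.range d, (∑ k ∈ Finset.range d,
      ((if ((d:ℤ) - n + j - k = 0) then (1:ℂ) else 0)
        - (if (-(d:ℤ) - n + j - k = 0) then (1:ℂ) else 0)))
      = (if ((j:ℤ) < n) then (1:ℂ) else 0) - (if (n + d ≤ (j:ℤ)) then (1:ℂ) else 0) := by
    intro j hj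
    rw [Finset.mem_range] at hj
    rw [Finset.sum_sub_distrib]
    have c1 : ∀ k : ℕ, ((d:ℤ) - n + j - k = 0) ↔ ((k:ℤ) = d - n + j) := by intro k; omega
    have c2 : ∀ k : ℕ, (-(d:ℤ) - n + j - k = 0) ↔ ((k:ℤ) = -d - n + j) := by intro k; omega
    simp only [c1, c2, sum_ind]
    congr 1 <;> congr 1 <;> simp only [eq_iff_iff] <;> omega
  rw [Finset.sum_congr rfl step, Finset.sum_sub_distrib]
  rw [Finset.sum_boole, Finset.sum_boole]
  have e1 : (Finset.range d).filter (fun j : ℕ => ((j:ℤ) < n)) = Finset.range (n.toNat) := by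
    ext j; simp only [Finset.mem_filter, Finset.mem_range]; omega
  have e2 : (Finset.range d).filter (fun j : ℕ => (n + d ≤ (j:ℤ))) = Finset.Ico (n+d).toNat d := by
    ext j; simp only [Finset.mem_filter, Finset.mem_range, Finset.mem_Ico]; omega
  rw [e1, e2, Finset.card_range, Nat.card_Ico]
  have : ((n.toNat : ℤ)) - ((d - (n+d).toNat : ℕ) : ℤ) = n := by omega
  exact_mod_cast congrArg (fun z : ℤ => (z:ℂ)) this

set_option maxHeartbeats 1000000 in
open intervalIntegral in
lemma Khat (d : ℕ) (n : ℤ) (h1 : -(d:ℤ) ≤ n) (h2 : n ≤ d) :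
    (∫ u in (0:ℝ)..1, e (-(n:ℝ) * u) * K d u) = 2 * Real.pi * Complex.I * n := by
  simp only [K_expand d n]
  rw [intervalIntegral.integral_const_mul]
  have hint : ∀ j ∈ Finset.range d, IntervalIntegrable (fun u : ℝ => ∑ k ∈ Finset.range d,
      (e (((((d:ℤ) - n + j - k) : ℤ):ℝ) * u) - e ((((-(d:ℤ) - n + j - k) : ℤ):ℝ) * u))) volume 0 1 := by
    intro j _
    apply Continuous.intervalIntegrable
    exact continuous_finset_sum _ (fun k _ =>
      ((e_cont.comp (by fun_prop)).sub (e_cont.comp (by fun_prop))))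
  rw [intervalIntegral.integral_finset_sum hint]
  have : ∀ j ∈ Finset.range d, (∫ u in (0:ℝ)..1, ∑ k ∈ Finset.range d,
      (e (((((d:ℤ) - n + j - k) : ℤ):ℝ) * u) - e ((((-(d:ℤ) - n + j - k) : ℤ):ℝ) * u)))
      = ∑ k ∈ Finset.range d,
        ((if ((d:ℤ) - n + j - k = 0) then (1:ℂ) else 0)
          - (if (-(d:ℤ) - n + j - k = 0) then (1:ℂ) else 0)) := by
    intro j _
    rw [intervalIntegral.integral_finset_sum (fun k _ => (e_intable _).sub (e_intable _))]
    refine Finset.sum_congr rfl fun k _ => ?_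
    rw [integral_sub (e_intable _) (e_intable _), e_integral, e_integral]
  rw [Finset.sum_congr rfl this, counting d n h1 h2]

lemma DD_sq (d : ℕ) (u : ℝ) :
    DD d u * (starRingEnd ℂ) (DD d u)
      = ∑ j ∈ Finset.range d, ∑ k ∈ Finset.range d, e (((((j:ℤ) - k) : ℤ):ℝ) * u) := by
  unfold DD
  rw [map_sum]
  simp only [e_conj, Finset.sum_mul_sum]
  refine Finset.sum_congr rfl fun j _ => Finset.sum_congr rfl fun k _ => ?_
  simp only [← neg_mul]
  rw [← e_add]; congr 1; push_cast; ring

lemma DD_int (d : ℕ) :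
    (∫ u in (0:ℝ)..1, ‖DD d u‖^2) = (d:ℝ) := by
  have h2 : (∫ u in (0:ℝ)..1, (DD d u * (starRingEnd ℂ) (DD d u))) = (d:ℂ) := by
    simp only [DD_sq]
    have hint : ∀ j ∈ Finset.range d, IntervalIntegrable (fun u : ℝ => ∑ k ∈ Finset.range d,
        e (((((j:ℤ) - k) : ℤ):ℝ) * u)) volume 0 1 := by
      intro j _
      exact (continuous_finset_sum _ (fun k _ => e_cont.comp (by fun_prop))).intervalIntegrable 0 1
    rw [intervalIntegral.integral_finset_sum hint]
    have h3 : ∀ j ∈ Finset.range d, (∫ u in (0:ℝ)..1, ∑ k ∈ Finset.range d,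
        e (((((j:ℤ) - k) : ℤ):ℝ) * u)) = 1 := by
      intro j hj
      rw [Finset.mem_range] at hj
      rw [intervalIntegral.integral_finset_sum (fun k _ => e_intable _)]
      simp only [e_integral]
      have c1 : ∀ k : ℕ, ((j:ℤ) - k = 0) ↔ ((k:ℤ) = (j:ℤ)) := by intro k; omega
      simp only [c1, sum_ind]
      rw [if_pos ⟨Int.ofNat_nonneg j, by exact_mod_cast hj⟩]
    rw [Finset.sum_congr rfl h3]
    simp
  have h1 : ∀ u:ℝ, (DD d u * (starRingEnd ℂ) (DD d u)) = ((‖DD d u‖^2 : ℝ) : ℂ) :=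
    fun u => mul_conj_norm _
  simp only [h1] at h2
  rw [intervalIntegral.integral_ofReal] at h2
  exact_mod_cast h2

lemma K_L1 (d : ℕ) : (∫ u in (0:ℝ)..1, ‖K d u‖) ≤ 4 * Real.pi * d := by
  have hpt : ∀ u : ℝ, ‖K d u‖ ≤ 4 * Real.pi * ‖DD d u‖^2 := by
    intro u
    unfold K
    rw [norm_mul, mul_conj_norm, Complex.norm_real, Real.norm_eq_abs,
      abs_of_nonneg (sq_nonneg _)]
    have hA : ‖2 * (Real.pi:ℂ) * Complex.I * (e ((d:ℝ) * u) - e (-(d:ℝ) * u))‖ ≤ 4 * Real.pi := by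
      rw [norm_mul, norm_mul, norm_mul, Complex.norm_I, Complex.norm_real, Real.norm_eq_abs,
        abs_of_nonneg Real.pi_pos.le]
      have h1 : ‖e ((d:ℝ) * u) - e (-(d:ℝ) * u)‖ ≤ 2 := by
        calc ‖e ((d:ℝ) * u) - e (-(d:ℝ) * u)‖ ≤ ‖e ((d:ℝ) * u)‖ + ‖e (-(d:ℝ) * u)‖ :=
            norm_sub_le _ _
          _ = 2 := by rw [e_norm, e_norm]; norm_num
      calc ‖(2:ℂ)‖ * Real.pi * 1 * ‖e ((d:ℝ) * u) - e (-(d:ℝ) * u)‖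
          ≤ ‖(2:ℂ)‖ * Real.pi * 1 * 2 := by gcongr
        _ = 4 * Real.pi := by norm_num; ring
    calc ‖2 * (Real.pi:ℂ) * Complex.I * (e ((d:ℝ) * u) - e (-(d:ℝ) * u))‖ * ‖DD d u‖^2
        ≤ (4 * Real.pi) * ‖DD d u‖^2 := by gcongr
      _ = 4 * Real.pi * ‖DD d u‖^2 := rfl
  have hKi : IntervalIntegrable (fun u => ‖K d u‖) volume 0 1 :=
    ((K_cont d).norm).intervalIntegrable 0 1
  have hDi : IntervalIntegrable (fun u => 4 * Real.pi * ‖DD d u‖^2) volume 0 1 := by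
    apply Continuous.intervalIntegrable
    exact (continuous_const.mul (((DD_cont d).norm).pow 2))
  calc (∫ u in (0:ℝ)..1, ‖K d u‖)
      ≤ ∫ u in (0:ℝ)..1, 4 * Real.pi * ‖DD d u‖^2 := by
        apply intervalIntegral.integral_mono_on (by norm_num) hKi hDi
        intro x _; exact hpt x
    _ = 4 * Real.pi * d := by
        rw [intervalIntegral.integral_const_mul, DD_int]

lemma conv_eq (d : ℕ) (a : ℤ → ℂ) (f : ℝ → ℂ)
    (hf : ∀ t : ℝ, f t = ∑ n ∈ Finset.Icc (-(d : ℤ)) (d : ℤ), a n * e ((n : ℝ) * t)) (t : ℝ) :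
    (∫ u in (0:ℝ)..1, f (t - u) * K d u)
      = ∑ n ∈ Finset.Icc (-(d : ℤ)) (d : ℤ),
          a n * (2 * Real.pi * Complex.I * n) * e ((n : ℝ) * t) := by
  have hsplit : ∀ u : ℝ, f (t - u) * K d u
      = ∑ n ∈ Finset.Icc (-(d : ℤ)) (d : ℤ),
          (a n * e ((n:ℝ) * t)) * (e (-(n:ℝ) * u) * K d u) := by
    intro u
    rw [hf (t-u), Finset.sum_mul]
    refine Finset.sum_congr rfl fun n _ => ?_
    have hsp : e ((n:ℝ) * (t - u)) = e ((n:ℝ) * t) * e (-(n:ℝ) * u) := by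
      rw [← e_add]; congr 1; ring
    rw [hsp]; ring
  simp only [hsplit]
  have hint : ∀ n ∈ Finset.Icc (-(d : ℤ)) (d : ℤ), IntervalIntegrable
      (fun u : ℝ => (a n * e ((n:ℝ) * t)) * (e (-(n:ℝ) * u) * K d u)) volume 0 1 := by
    intro n _
    apply Continuous.intervalIntegrable
    exact continuous_const.mul ((e_cont.comp (by fun_prop)).mul (K_cont d))
  rw [intervalIntegral.integral_finset_sum hint]
  refine Finset.sum_congr rfl fun n hn => ?_
  rw [Finset.mem_Icc] at hn
  rw [intervalIntegral.integral_const_mul, Khat d n hn.1 hn.2]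
  ring

lemma bernsteinL1 (d : ℕ) (a : ℤ → ℂ) (f : ℝ → ℂ)
    (hf : ∀ t : ℝ, f t = ∑ n ∈ Finset.Icc (-(d : ℤ)) (d : ℤ), a n * e ((n : ℝ) * t)) :
    (∫ t in (0:ℝ)..1, ‖∑ n ∈ Finset.Icc (-(d : ℤ)) (d : ℤ),
        a n * (2 * Real.pi * Complex.I * n) * e ((n : ℝ) * t)‖)
      ≤ 4 * Real.pi * d * ∫ t in (0:ℝ)..1, ‖f t‖ := by
  have hfc : Continuous f := by
    have hfeq : f = fun t => ∑ n ∈ Finset.Icc (-(d : ℤ)) (d : ℤ), a n * e ((n : ℝ) * t) :=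
      funext hf
    rw [hfeq]
    exact continuous_finset_sum _ fun n _ => continuous_const.mul (e_cont.comp (by fun_prop))
  have hgc : Continuous (fun t : ℝ => ∑ n ∈ Finset.Icc (-(d : ℤ)) (d : ℤ),
      a n * (2 * Real.pi * Complex.I * n) * e ((n : ℝ) * t)) :=
    continuous_finset_sum _ fun n _ => continuous_const.mul (e_cont.comp (by fun_prop))
  have hper : Function.Periodic (fun t => ‖f t‖) 1 := by
    intro t
    simp only
    rw [hf (t+1), hf t]
    congr 1
    refine Finset.sum_congr rfl fun n _ => ?_
    have : e ((n:ℝ) * (t + 1)) = e ((n:ℝ) * t) * e ((n:ℤ) : ℝ) := by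
      rw [← e_add]; congr 1; push_cast; ring
    rw [this, e_int, mul_one]
  have hshift : ∀ u : ℝ, (∫ t in (0:ℝ)..1, ‖f (t - u)‖) = ∫ t in (0:ℝ)..1, ‖f t‖ := by
    intro u
    rw [intervalIntegral.integral_comp_sub_right (fun t => ‖f t‖) u]
    have h2 := hper.intervalIntegral_add_eq (-u) 0
    simp only [zero_add] at h2
    calc (∫ t in (0:ℝ)-u..1-u, ‖f t‖) = ∫ t in -u..(-u+1), ‖f t‖ := by norm_num; ring_nf
      _ = ∫ t in (0:ℝ)..1, ‖f t‖ := h2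
  set μ : Measure ℝ := volume.restrict (Set.Ioc (0:ℝ) 1) with hμ
  have hio : ∀ h : ℝ → ℝ, (∫ t in (0:ℝ)..1, h t) = ∫ t, h t ∂μ := fun h =>
    intervalIntegral.integral_of_le zero_le_one
  set F2 : ℝ → ℝ → ℝ := fun t u => ‖f (t - u)‖ * ‖K d u‖ with hF2
  have hF2c : Continuous (Function.uncurry F2) := by
    apply Continuous.mul
    · exact (hfc.comp (continuous_fst.sub continuous_snd)).norm
    · exact ((K_cont d).comp continuous_snd).norm
  have hFi : Integrable (Function.uncurry F2) (μ.prod μ) := by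
    rw [hμ, Measure.prod_restrict, ← MeasureTheory.Measure.volume_eq_prod]
    apply MeasureTheory.IntegrableOn.mono_set
      (t := Set.Icc (0:ℝ) 1 ×ˢ Set.Icc (0:ℝ) 1)
    · exact (hF2c.continuousOn).integrableOn_compact (isCompact_Icc.prod isCompact_Icc)
    · exact Set.prod_mono Set.Ioc_subset_Icc_self Set.Ioc_subset_Icc_self
  have hfnorm_int : Integrable (fun t => ‖f t‖) μ := by
    rw [hμ]
    exact (hfc.norm).integrableOn_Ioc
  have hgnorm_int : Integrable (fun t => ‖∑ n ∈ Finset.Icc (-(d : ℤ)) (d : ℤ),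
      a n * (2 * Real.pi * Complex.I * n) * e ((n : ℝ) * t)‖) μ := by
    rw [hμ]; exact (hgc.norm).integrableOn_Ioc
  have hpt : ∀ t : ℝ, ‖∑ n ∈ Finset.Icc (-(d : ℤ)) (d : ℤ),
      a n * (2 * Real.pi * Complex.I * n) * e ((n : ℝ) * t)‖ ≤ ∫ u, F2 t u ∂μ := by
    intro t
    rw [← conv_eq d a f hf t, ← hio (fun u => F2 t u)]
    calc ‖∫ u in (0:ℝ)..1, f (t - u) * K d u‖
        ≤ ∫ u in (0:ℝ)..1, ‖f (t - u) * K d u‖ :=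
          intervalIntegral.norm_integral_le_integral_norm zero_le_one
      _ = ∫ u in (0:ℝ)..1, F2 t u := by
          refine intervalIntegral.integral_congr fun u _ => ?_
          rw [hF2]; exact norm_mul _ _
  have hIfnn : 0 ≤ ∫ t in (0:ℝ)..1, ‖f t‖ :=
    intervalIntegral.integral_nonneg zero_le_one (fun u _ => norm_nonneg _)
  rw [hio]
  calc (∫ t, ‖∑ n ∈ Finset.Icc (-(d : ℤ)) (d : ℤ),
        a n * (2 * Real.pi * Complex.I * n) * e ((n : ℝ) * t)‖ ∂μ)
      ≤ ∫ t, (∫ u, F2 t u ∂μ) ∂μ := by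
        apply integral_mono hgnorm_int ?_ hpt
        have := hFi.integral_norm_prod_left
        simpa only [Function.uncurry_apply_pair, hF2, norm_mul, norm_norm] using this
    _ = ∫ u, (∫ t, F2 t u ∂μ) ∂μ := integral_integral_swap hFi
    _ = ∫ u, (∫ t in (0:ℝ)..1, ‖f t‖) * ‖K d u‖ ∂μ := by
        refine integral_congr_ae (Filter.Eventually.of_forall fun u => ?_)
        rw [hF2]
        simp only
        rw [MeasureTheory.integral_mul_const]
        congr 1
        rw [← hio (fun t => ‖f (t-u)‖), hshift u]
    _ = (∫ t in (0:ℝ)..1, ‖f t‖) * ∫ u, ‖K d u‖ ∂μ := MeasureTheory.integral_const_mul _ _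
    _ ≤ (∫ t in (0:ℝ)..1, ‖f t‖) * (4 * Real.pi * d) := by
        apply mul_le_mul_of_nonneg_left ?_ hIfnn
        rw [← hio (fun u => ‖K d u‖)]
        exact K_L1 d
    _ = 4 * Real.pi * d * ∫ t in (0:ℝ)..1, ‖f t‖ := by ring


lemma quad (f g : ℝ → ℂ) (hg : Continuous g) (hd : ∀ t, HasDerivAt f (g t) t)
    (N : ℕ) (hN : 0 < N) :
    |(∫ t in (0:ℝ)..1, ‖f t‖) - (1 / (N : ℝ)) * ∑ j ∈ Finset.Icc 1 N, ‖f ((j : ℝ) / N)‖|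
      ≤ (1 / (N : ℝ)) * ∫ t in (0:ℝ)..1, ‖g t‖ := by
  have hfc : Continuous f := by
    rw [continuous_iff_continuousAt]; exact fun t => (hd t).continuousAt
  have hNR : (0:ℝ) < N := by exact_mod_cast hN
  set a : ℕ → ℝ := fun k => (k:ℝ) / N with ha
  have hmono : ∀ k : ℕ, a k ≤ a (k+1) := by
    intro k
    show (k:ℝ)/N ≤ ((k+1:ℕ):ℝ)/N
    gcongr
    push_cast; linarith
  have ha0 : a 0 = 0 := by simp [ha]
  have haN : a N = 1 := by simp only [ha]; exact div_self hNR.ne'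
  have hftc : ∀ s t : ℝ, f t - f s = ∫ x in s..t, g x := by
    intro s t
    rw [intervalIntegral.integral_eq_sub_of_hasDerivAt (fun x _ => hd x)
      (hg.intervalIntegrable s t)]
  have hIf : (∫ t in (0:ℝ)..1, ‖f t‖) = ∑ k ∈ Finset.range N, ∫ t in a k..a (k+1), ‖f t‖ := by
    rw [intervalIntegral.sum_integral_adjacent_intervals
      (fun k _ => (hfc.norm.intervalIntegrable _ _))]
    rw [ha0, haN]
  have hIg : (∫ t in (0:ℝ)..1, ‖g t‖) = ∑ k ∈ Finset.range N, ∫ t in a k..a (k+1), ‖g t‖ := by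
    rw [intervalIntegral.sum_integral_adjacent_intervals
      (fun k _ => (hg.norm.intervalIntegrable _ _))]
    rw [ha0, haN]
  have hS : (1 / (N : ℝ)) * ∑ j ∈ Finset.Icc 1 N, ‖f ((j : ℝ) / N)‖
      = ∑ k ∈ Finset.range N, (1 / (N:ℝ)) * ‖f (a (k+1))‖ := by
    rw [Finset.mul_sum]
    have himg : Finset.Icc 1 N = Finset.image (fun k => k+1) (Finset.range N) := by
      ext j
      simp only [Finset.mem_Icc, Finset.mem_image, Finset.mem_range]
      exact ⟨fun ⟨h1,h2⟩ => ⟨j-1, by omega, by omega⟩, fun ⟨k,hk,he⟩ => by omega⟩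
    rw [himg, Finset.sum_image (by intro x _ y _ h; simpa using h)]
  rw [hIf, hS, hIg, ← Finset.sum_sub_distrib, Finset.mul_sum]
  refine (Finset.abs_sum_le_sum_abs _ _).trans (Finset.sum_le_sum fun k _ => ?_)
  set C : ℝ := ∫ t in a k..a (k+1), ‖g t‖ with hC
  have hCnonneg : 0 ≤ C :=
    intervalIntegral.integral_nonneg (hmono k) (fun u _ => norm_nonneg _)
  have hlen : a (k+1) - a k = 1 / N := by
    show ((k+1:ℕ):ℝ)/N - (k:ℝ)/N = 1/N
    push_cast; field_simp; ring
  have hconst : (1 / (N:ℝ)) * ‖f (a (k+1))‖ = ∫ _ in a k..a (k+1), ‖f (a (k+1))‖ := by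
    rw [intervalIntegral.integral_const, smul_eq_mul, hlen]
  rw [hconst, ← intervalIntegral.integral_sub (hfc.norm.intervalIntegrable _ _)
    intervalIntegrable_const]
  have hbound : ∀ t ∈ Set.uIoc (a k) (a (k+1)), ‖‖f t‖ - ‖f (a (k+1))‖‖ ≤ C := by
    intro t ht
    rw [Set.uIoc_of_le (hmono k)] at ht
    rw [Real.norm_eq_abs]
    have h1 : |‖f t‖ - ‖f (a (k+1))‖| ≤ ‖f t - f (a (k+1))‖ := abs_norm_sub_norm_le _ _
    have h2 : f t - f (a (k+1)) = ∫ x in (a (k+1))..t, g x := hftc _ _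
    have h3 : ‖∫ x in (a (k+1))..t, g x‖ ≤ |∫ x in (a (k+1))..t, ‖g x‖| :=
      intervalIntegral.norm_integral_le_abs_integral_norm
    have h4 : |∫ x in (a (k+1))..t, ‖g x‖| = ∫ x in t..(a (k+1)), ‖g x‖ := by
      rw [intervalIntegral.integral_symm, abs_neg, abs_of_nonneg
        (intervalIntegral.integral_nonneg ht.2 (fun u _ => norm_nonneg _))]
    have h5 : (∫ x in t..(a (k+1)), ‖g x‖) ≤ C := by
      apply intervalIntegral.integral_mono_interval ht.1.le ht.2 le_rfl
      · filter_upwards with x using norm_nonneg _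
      · exact hg.norm.intervalIntegrable _ _
    calc |‖f t‖ - ‖f (a (k+1))‖| ≤ ‖f t - f (a (k+1))‖ := h1
      _ = ‖∫ x in (a (k+1))..t, g x‖ := by rw [h2]
      _ ≤ |∫ x in (a (k+1))..t, ‖g x‖| := h3
      _ = ∫ x in t..(a (k+1)), ‖g x‖ := h4
      _ ≤ C := h5
  calc |∫ t in a k..a (k+1), (‖f t‖ - ‖f (a (k+1))‖)|
      ≤ C * |a (k+1) - a k| := by
        rw [← Real.norm_eq_abs]
        exact intervalIntegral.norm_integral_le_of_norm_le_const hbound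
    _ = 1 / (N:ℝ) * C := by
        rw [hlen, abs_of_nonneg (by positivity)]; ring

lemma deriv_term (a : ℤ → ℂ) (n : ℤ) (t : ℝ) :
    HasDerivAt (fun x : ℝ => a n * e ((n:ℝ) * x))
      (a n * (2 * Real.pi * Complex.I * n) * e ((n:ℝ) * t)) t := by
  set c : ℂ := 2 * Real.pi * Complex.I * n with hc
  have hce : ∀ x : ℝ, e ((n:ℝ) * x) = Complex.exp (c * x) := by
    intro x; unfold e; rw [hc]; push_cast; ring_nf
  have D : HasDerivAt (fun y : ℝ => Complex.exp (c * y)) (Complex.exp (c * t) * (c * 1)) t :=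
    (((hasDerivAt_id (t:ℂ)).const_mul c).comp_ofReal).cexp
  have D2 := D.const_mul (a n)
  simp only [← hce] at D2
  refine D2.congr_deriv ?_
  rw [hce t]; ring

/-- Lemma 3.2: for a trigonometric polynomial `f` of degree `d` and a positive integer `N`,
`|‖f‖_{L^1} − (1/N) ∑_{j=1}^N |f(j/N)|| ≤ (4πd/N) ‖f‖_{L^1}`. -/
theorem quadrature_error
    (d : ℕ) (a : ℤ → ℂ) (f : ℝ → ℂ)
    (hf : ∀ t : ℝ, f t = ∑ n ∈ Finset.Icc (-(d : ℤ)) (d : ℤ), a n * e ((n : ℝ) * t))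
    (N : ℕ) (hN : 0 < N) :
    |(∫ t in (0:ℝ)..1, ‖f t‖) - (1 / (N : ℝ)) * ∑ j ∈ Finset.Icc 1 N, ‖f ((j : ℝ) / N)‖| ≤
      (4 * Real.pi * d / N) * ∫ t in (0:ℝ)..1, ‖f t‖ := by
  set g : ℝ → ℂ := fun t => ∑ n ∈ Finset.Icc (-(d : ℤ)) (d : ℤ),
      a n * (2 * Real.pi * Complex.I * n) * e ((n : ℝ) * t) with hg
  have hgc : Continuous g :=
    continuous_finset_sum _ fun n _ => continuous_const.mul (e_cont.comp (by fun_prop))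
  have hd : ∀ t : ℝ, HasDerivAt f (g t) t := by
    intro t
    have hfeq : f = fun t => ∑ n ∈ Finset.Icc (-(d : ℤ)) (d : ℤ), a n * e ((n : ℝ) * t) :=
      funext hf
    rw [hfeq, hg]
    exact HasDerivAt.fun_sum (fun n _ => deriv_term a n t)
  have h1 := quad f g hgc hd N hN
  have h2 : (∫ t in (0:ℝ)..1, ‖g t‖) ≤ 4 * Real.pi * d * ∫ t in (0:ℝ)..1, ‖f t‖ :=
    bernsteinL1 d a f hf
  have hNR : (0:ℝ) < N := by exact_mod_cast hN
  calc |(∫ t in (0:ℝ)..1, ‖f t‖) - (1 / (N : ℝ)) * ∑ j ∈ Finset.Icc 1 N, ‖f ((j : ℝ) / N)‖|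
      ≤ (1 / (N : ℝ)) * ∫ t in (0:ℝ)..1, ‖g t‖ := h1
    _ ≤ (1 / (N : ℝ)) * (4 * Real.pi * d * ∫ t in (0:ℝ)..1, ‖f t‖) := by
        apply mul_le_mul_of_nonneg_left h2 (by positivity)
    _ = (4 * Real.pi * d / N) * ∫ t in (0:ℝ)..1, ‖f t‖ := by field_simp
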